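/- For natural numbers m, l, h, u with u ≤ min(m,l) and setting A(m,l,h,u) = √(m!·(m+h)!·l!·(l+h)!)/((m-u)!·(l-u)!·(h+u)!·u!): (l-u)·A(m,l,h,u) = A(m,l,h,u+1)·[ (m+1)(m+h+1)/(m-u) − (2m+h+1) + (m-u-1) ], provided u < m and u < l. -/

import Mathlib

/-- The combinatorial factor `A(m,l,h,u)`. -/
noncomputable def calA (m l h u : ℕ) : ℝ :=
  Real.sqrt ((Nat.factorial m) * (Nat.factorial (m+h)) * (Nat.factorial l)
    * (Nat.factorial (l+h)))
  / ((Nat.factorial (m-u)) * (Nat.factorial (l-u)) * (Nat.factorial (h+u))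
    * (Nat.factorial u))

theorem calA_shift_identity (m l h u : ℕ) (hum : u < m) (hul : u < l) :
    ((l : ℝ) - u) * calA m l h u
      = calA m l h (u+1)
        * (((m : ℝ)+1) * ((m : ℝ)+(h : ℝ)+1) / ((m : ℝ) - u)
            - (2*(m : ℝ)+(h : ℝ)+1) + ((m : ℝ) - (u : ℝ) - 1)) := by
  have hm1 : m - u = (m - (u+1)) + 1 := by omega
  have hl1 : l - u = (l - (u+1)) + 1 := by omega
  have hhu : h + (u+1) = (h + u) + 1 := by omega
  have hmu : ((m - (u+1) : ℕ) : ℝ) = (m : ℝ) - u - 1 := by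
    have h' : (u+1 : ℕ) ≤ m := hum
    push_cast [Nat.cast_sub h']; ring
  have hlu : ((l - (u+1) : ℕ) : ℝ) = (l : ℝ) - u - 1 := by
    have h' : (u+1 : ℕ) ≤ l := hul
    push_cast [Nat.cast_sub h']; ring
  have f1 : ((Nat.factorial (m - (u+1)) : ℕ) : ℝ) ≠ 0 := by positivity
  have f2 : ((Nat.factorial (l - (u+1)) : ℕ) : ℝ) ≠ 0 := by positivity
  have f3 : ((Nat.factorial (h + u) : ℕ) : ℝ) ≠ 0 := by positivity
  have f4 : ((Nat.factorial u : ℕ) : ℝ) ≠ 0 := by positivity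
  have hmune : (m : ℝ) - u ≠ 0 := by
    have : (u:ℝ) < m := by exact_mod_cast hum
    linarith
  have hlune : (l : ℝ) - u ≠ 0 := by
    have : (u:ℝ) < l := by exact_mod_cast hul
    linarith
  have hbracket : (((m : ℝ)+1) * ((m : ℝ)+(h : ℝ)+1) / ((m : ℝ) - u)
        - (2*(m : ℝ)+(h : ℝ)+1) + ((m : ℝ) - (u : ℝ) - 1))
      = ((u:ℝ)+1) * ((h:ℝ)+(u:ℝ)+1) / ((m:ℝ)-u) := by
    field_simp
    ring
  have key : calA m l h (u+1) * (((u:ℝ)+1) * ((h:ℝ)+(u:ℝ)+1))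
      = (((m:ℝ)-u) * ((l:ℝ)-u)) * calA m l h u := by
    unfold calA
    rw [hm1, hl1, hhu, Nat.factorial_succ (m-(u+1)), Nat.factorial_succ (l-(u+1)),
      Nat.factorial_succ (h+u), Nat.factorial_succ u]
    push_cast [hmu, hlu]
    rw [sub_add_cancel, sub_add_cancel]
    field_simp
  rw [hbracket, mul_div_assoc', key]
  field_simp
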